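/- Suppose there exists a 4-DGDD of type (g, (g/4)^4)^u (with 4 | g), and for some m ≥ 0 there exists a 4-GDD of type (g/4)^u m^1. Then there exists a 4-GDD of type g^u m^1. -/

import Mathlib

/-- A `K`-group divisible design on point set `V`: `Gs` is the multiset of groups
(forming a partition of `V`), `Bs` the set of blocks, `K` the set of allowed block
sizes.  Every pair of points from distinct groups lies in exactly one block and no
pair of points from the same group lies in any block. -/
structure IsGDD (V : Type) (Gs : Multiset (Finset V)) (Bs : Finset (Finset V))
    (K : Set ℕ) : Prop where
  partition : ∀ v : V, ∃ G s, Gs = G ::ₘ s ∧ v ∈ G ∧ ∀ G' ∈ s, v ∉ G'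
  sizes : ∀ b ∈ Bs, b.card ∈ K
  cross : ∀ x y : V, x ≠ y → (∀ G ∈ Gs, ¬(x ∈ G ∧ y ∈ G)) →
      ∃! b, b ∈ Bs ∧ x ∈ b ∧ y ∈ b
  within : ∀ G ∈ Gs, ∀ x ∈ G, ∀ y ∈ G, x ≠ y → ∀ b ∈ Bs, ¬(x ∈ b ∧ y ∈ b)

/-- Existence of a `K`-GDD whose multiset of group sizes is `gtype`. -/
def GDDExists (K : Set ℕ) (gtype : Multiset ℕ) : Prop :=
  ∃ (V : Type) (_ : Fintype V) (Gs : Multiset (Finset V)) (Bs : Finset (Finset V)),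
    IsGDD V Gs Bs K ∧ Gs.map Finset.card = gtype

/-- A double group divisible design: `Gs` are the groups and `Hs` the holes, both
partitions of `V`; every pair of points neither in a common group nor in a common
hole lies in exactly one block, and all other pairs lie in no block. -/
structure IsDGDD (V : Type) (Gs Hs : Multiset (Finset V)) (Bs : Finset (Finset V))
    (K : Set ℕ) : Prop where
  gpartition : ∀ v : V, ∃ G s, Gs = G ::ₘ s ∧ v ∈ G ∧ ∀ G' ∈ s, v ∉ G'
  hpartition : ∀ v : V, ∃ H s, Hs = H ::ₘ s ∧ v ∈ H ∧ ∀ H' ∈ s, v ∉ H'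
  sizes : ∀ b ∈ Bs, b.card ∈ K
  cross : ∀ x y : V, x ≠ y → (∀ G ∈ Gs, ¬(x ∈ G ∧ y ∈ G)) →
      (∀ H ∈ Hs, ¬(x ∈ H ∧ y ∈ H)) → ∃! b, b ∈ Bs ∧ x ∈ b ∧ y ∈ b
  withinG : ∀ G ∈ Gs, ∀ x ∈ G, ∀ y ∈ G, x ≠ y → ∀ b ∈ Bs, ¬(x ∈ b ∧ y ∈ b)
  withinH : ∀ H ∈ Hs, ∀ x ∈ H, ∀ y ∈ H, x ≠ y → ∀ b ∈ Bs, ¬(x ∈ b ∧ y ∈ b)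

/-- Existence of a `K`-DGDD with multiset of group sizes `tG`, multiset of hole
sizes `tH`, in which every group meets every hole in exactly `meet` points. -/
def DGDDExists (K : Set ℕ) (tG tH : Multiset ℕ) (meet : ℕ) : Prop :=
  ∃ (V : Type) (_ : Fintype V) (Gs Hs : Multiset (Finset V)) (Bs : Finset (Finset V)),
    IsDGDD V Gs Hs Bs K ∧ Gs.map Finset.card = tG ∧ Hs.map Finset.card = tH ∧
      ∀ G ∈ Gs, ∀ H ∈ Hs, ∃ S : Finset V, S.card = meet ∧ ∀ x : V, x ∈ S ↔ x ∈ G ∧ x ∈ H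

lemma disjt_of_part {α : Type} [DecidableEq α] {A : Multiset (Finset α)}
    (h : ∀ v : α, ∃ G s, A = G ::ₘ s ∧ v ∈ G ∧ ∀ G' ∈ s, v ∉ G') :
    ∀ a ∈ A, ∀ x ∈ a, ∀ a' ∈ A.erase a, x ∉ a' := by
  intro a ha x hx a' ha'
  obtain ⟨G, s, hAs, hxG, hnot⟩ := h x
  have haG : a = G := by
    rcases Multiset.mem_cons.1 (hAs ▸ ha) with h1 | h1
    · exact h1
    · exact absurd hx (hnot a h1)
  subst haG
  rw [hAs, Multiset.erase_cons_head] at ha'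
  exact hnot a' ha'

lemma glue {α β : Type} [DecidableEq α] [DecidableEq β] (f₀ : α → β) :
    ∀ (A : Multiset (Finset α)) (B : Multiset (Finset β)),
    Multiset.Rel (fun a b => a.card = b.card) A B →
    (∀ a ∈ A, ∀ x ∈ a, ∀ a' ∈ A.erase a, x ∉ a') →
    (∀ b ∈ B, ∀ y ∈ b, ∀ b' ∈ B.erase b, y ∉ b') →
    ∃ f : α → β,
      (∀ x y a a', a ∈ A → a' ∈ A → x ∈ a → y ∈ a' → f x = f y → x = y) ∧
      (∀ a ∈ A, ∃ b ∈ B, ∀ y, y ∈ b ↔ ∃ x ∈ a, f x = y) ∧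
      (∀ b ∈ B, ∃ a ∈ A, ∀ y, y ∈ b ↔ ∃ x ∈ a, f x = y) := by
  intro A B hrel
  induction hrel with
  | zero =>
    intro _ _
    exact ⟨f₀, by simp, by simp, by simp⟩
  | @cons a b A' B' hab hrel ih =>
    intro hA hB
    have hA' : ∀ a₁ ∈ A', ∀ x ∈ a₁, ∀ a' ∈ A'.erase a₁, x ∉ a' := by
      intro a₁ h1 x hx a' ha'
      exact hA a₁ (Multiset.mem_cons_of_mem h1) x hx a'
        (Multiset.mem_of_le (Multiset.erase_le_erase a₁ (Multiset.le_cons_self A' a)) ha')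
    have hB' : ∀ b₁ ∈ B', ∀ y ∈ b₁, ∀ b' ∈ B'.erase b₁, y ∉ b' := by
      intro b₁ h1 y hy b' hb'
      exact hB b₁ (Multiset.mem_cons_of_mem h1) y hy b'
        (Multiset.mem_of_le (Multiset.erase_le_erase b₁ (Multiset.le_cons_self B' b)) hb')
    have hdA : ∀ x ∈ a, ∀ a' ∈ A', x ∉ a' := by
      intro x hx a' ha'
      exact hA a (Multiset.mem_cons_self a A') x hx a'
        (by rw [Multiset.erase_cons_head]; exact ha')
    have hdB : ∀ y ∈ b, ∀ b' ∈ B', y ∉ b' := by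
      intro y hy b' hb'
      exact hB b (Multiset.mem_cons_self b B') y hy b'
        (by rw [Multiset.erase_cons_head]; exact hb')
    obtain ⟨f', hinj', himg', hsur'⟩ := ih hA' hB'
    let e : {x // x ∈ a} ≃ {y // y ∈ b} := Finset.equivOfCardEq hab
    set f : α → β := fun x => if h : x ∈ a then (e ⟨x, h⟩ : β) else f' x with hf
    have hfa : ∀ x (h : x ∈ a), f x = (e ⟨x, h⟩ : β) := by
      intro x h; simp only [hf, dif_pos h]
    have hfna : ∀ x, x ∉ a → f x = f' x := by
      intro x h; simp only [hf, dif_neg h]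
    have hfmem : ∀ x ∈ a, f x ∈ b := by
      intro x hx; rw [hfa x hx]; exact (e ⟨x, hx⟩).2
    refine ⟨f, ?_, ?_, ?_⟩
    · intro x y a₁ a₂ h1 h2 hx hy hxy
      rcases Multiset.mem_cons.1 h1 with h1' | h1' <;>
        rcases Multiset.mem_cons.1 h2 with h2' | h2'
      · rw [h1'] at hx; rw [h2'] at hy
        have heq : ((e ⟨x, hx⟩ : {y // y ∈ b}) : β) = ((e ⟨y, hy⟩ : {y // y ∈ b}) : β) := by
          rw [← hfa x hx, ← hfa y hy]; exact hxy
        have : (⟨x, hx⟩ : {x // x ∈ a}) = ⟨y, hy⟩ := e.injective (Subtype.ext heq)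
        exact congrArg Subtype.val this
      · rw [h1'] at hx
        exfalso
        have hyna : y ∉ a := fun hya => hdA y hya a₂ h2' hy
        have h1 : f x ∈ b := hfmem x hx
        have h2 : f y = f' y := hfna y hyna
        obtain ⟨b₂, hb₂, hib₂⟩ := himg' a₂ h2' 
        have : f' y ∈ b₂ := (hib₂ (f' y)).2 ⟨y, hy, rfl⟩
        exact hdB (f x) h1 b₂ hb₂ (hxy ▸ h2 ▸ this)
      · rw [h2'] at hy
        exfalso
        have hxna : x ∉ a := fun hxa => hdA x hxa a₁ h1' hx
        have h2 : f y ∈ b := hfmem y hy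
        have h1 : f x = f' x := hfna x hxna
        obtain ⟨b₁, hb₁, hib₁⟩ := himg' a₁ h1'
        have : f' x ∈ b₁ := (hib₁ (f' x)).2 ⟨x, hx, rfl⟩
        exact hdB (f y) h2 b₁ hb₁ (hxy ▸ h1 ▸ this)
      · have hxna : x ∉ a := fun hxa => hdA x hxa a₁ h1' hx
        have hyna : y ∉ a := fun hya => hdA y hya a₂ h2' hy
        exact hinj' x y a₁ a₂ h1' h2' hx hy (by rw [← hfna x hxna, ← hfna y hyna]; exact hxy)
    · intro a₁ h1
      rcases Multiset.mem_cons.1 h1 with rfl | h1'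
      · refine ⟨b, Multiset.mem_cons_self b B', fun y => ⟨fun hy => ?_, fun ⟨x, hx, hfx⟩ => hfx ▸ hfmem x hx⟩⟩
        refine ⟨(e.symm ⟨y, hy⟩ : α), (e.symm ⟨y, hy⟩).2, ?_⟩
        rw [hfa _ (e.symm ⟨y, hy⟩).2]
        have : e ⟨(e.symm ⟨y, hy⟩ : α), (e.symm ⟨y, hy⟩).2⟩ = ⟨y, hy⟩ := by
          rw [Subtype.coe_eta]; exact e.apply_symm_apply _
        rw [this]
      · obtain ⟨b₂, hb₂, hib₂⟩ := himg' a₁ h1'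
        refine ⟨b₂, Multiset.mem_cons_of_mem hb₂, fun y => ?_⟩
        rw [hib₂ y]
        constructor
        · rintro ⟨x, hx, hfx⟩
          exact ⟨x, hx, by rw [hfna x (fun hxa => hdA x hxa a₁ h1' hx)]; exact hfx⟩
        · rintro ⟨x, hx, hfx⟩
          exact ⟨x, hx, by rw [← hfna x (fun hxa => hdA x hxa a₁ h1' hx)]; exact hfx⟩
    · intro b₁ h1
      rcases Multiset.mem_cons.1 h1 with rfl | h1'
      · refine ⟨a, Multiset.mem_cons_self a A', fun y => ⟨fun hy => ?_, fun ⟨x, hx, hfx⟩ => hfx ▸ hfmem x hx⟩⟩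
        refine ⟨(e.symm ⟨y, hy⟩ : α), (e.symm ⟨y, hy⟩).2, ?_⟩
        rw [hfa _ (e.symm ⟨y, hy⟩).2]
        have : e ⟨(e.symm ⟨y, hy⟩ : α), (e.symm ⟨y, hy⟩).2⟩ = ⟨y, hy⟩ := by
          rw [Subtype.coe_eta]; exact e.apply_symm_apply _
        rw [this]
      · obtain ⟨a₂, ha₂, hia₂⟩ := hsur' b₁ h1'
        refine ⟨a₂, Multiset.mem_cons_of_mem ha₂, fun y => ?_⟩
        rw [hia₂ y]
        constructor
        · rintro ⟨x, hx, hfx⟩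
          exact ⟨x, hx, by rw [hfna x (fun hxa => hdA x hxa a₂ ha₂ hx)]; exact hfx⟩
        · rintro ⟨x, hx, hfx⟩
          exact ⟨x, hx, by rw [← hfna x (fun hxa => hdA x hxa a₂ ha₂ hx)]; exact hfx⟩


/-- Filling the holes: if there is a 4-DGDD of type (g, (g/4)^4)^u (here
g = 4·k) and a 4-GDD of type (g/4)^u m^1, then there is a 4-GDD of type
g^u m^1. -/
theorem stmt_14 (k u m : ℕ)
    (hD : DGDDExists {4} (Multiset.replicate u (4 * k))
      (Multiset.replicate 4 (k * u)) k)
    (hF : GDDExists {4} (Multiset.replicate u k + {m})) :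
    GDDExists {4} (Multiset.replicate u (4 * k) + {m}) := by
  classical
  obtain ⟨V, fV, Gs, Hs, Bs, hD, hGs, hHs, hmeet⟩ := hD
  obtain ⟨W, fW, Ws, Cs, hF, hWs⟩ := hF
  haveI := fV; haveI := fW
  let inlE : V ↪ V ⊕ Fin m := ⟨Sum.inl, Sum.inl_injective⟩
  let inrE : Fin m ↪ V ⊕ Fin m := ⟨Sum.inr, Sum.inr_injective⟩
  let Mset : Finset (V ⊕ Fin m) := Finset.univ.map inrE
  let Gs' : Multiset (Finset (V ⊕ Fin m)) := Gs.map (fun G => G.map inlE) + {Mset}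
  let BH : Finset V → Multiset (Finset (V ⊕ Fin m)) :=
    fun H => Gs.map (fun G => (G ∩ H).map inlE) + {Mset}
  have hMset : ∀ z, z ∈ Mset ↔ ∃ j : Fin m, z = Sum.inr j := by
    intro z
    simp only [Mset, Finset.mem_map, Finset.mem_univ, true_and, inrE]
    constructor
    · rintro ⟨j, hj⟩; exact ⟨j, hj.symm⟩
    · rintro ⟨j, hj⟩; exact ⟨j, hj.symm⟩
  have hMsetGs' : Mset ∈ Gs' := Multiset.mem_add.2 (Or.inr (Multiset.mem_singleton_self _))
  have hGsDisj := disjt_of_part hD.gpartition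
  have hHsDisj := disjt_of_part hD.hpartition
  have hWsDisj := disjt_of_part hF.partition
  have hGscard : Multiset.card Gs = u := by
    have := congrArg Multiset.card hGs; simpa using this
  have hGHcard : ∀ G ∈ Gs, ∀ H ∈ Hs, (G ∩ H).card = k := by
    intro G hG H hH
    obtain ⟨S, hSc, hSm⟩ := hmeet G hG H hH
    have hSe : S = G ∩ H := Finset.ext fun x => by rw [hSm x, Finset.mem_inter]
    rw [← hSe]; exact hSc
  have hBHcard : ∀ H ∈ Hs, (BH H).map Finset.card = Multiset.replicate u k + {m} := by
    intro H hH
    show ((Gs.map fun G => (G ∩ H).map inlE) + {Mset}).map Finset.card = _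
    rw [Multiset.map_add, Multiset.map_map, Multiset.map_singleton]
    congr 1
    · have h1 : Gs.map (Finset.card ∘ fun G => (G ∩ H).map inlE) = Gs.map (fun _ => k) :=
        Multiset.map_congr rfl (fun G hG => by
          simp only [Function.comp_apply, Finset.card_map]; exact hGHcard G hG H hH)
      rw [h1, Multiset.map_const', hGscard]
    · simp [Mset]
  -- a default function for `choose!`
  have htot : ∀ w : W, ∃ a ∈ Ws, w ∈ a := by
    intro w
    obtain ⟨G, s, h1, h2, _⟩ := hF.partition w
    exact ⟨G, h1 ▸ Multiset.mem_cons_self _ _, h2⟩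
  have hHscard : Multiset.card Hs = 4 := by
    have := congrArg Multiset.card hHs; simpa using this
  haveI hfzero : Nonempty (W → V ⊕ Fin m) := by
    by_cases hW : Nonempty W
    · obtain ⟨w⟩ := hW
      obtain ⟨a, ha, hw⟩ := htot w
      have hac : a.card ∈ Ws.map Finset.card := Multiset.mem_map_of_mem _ ha
      rw [hWs] at hac
      have hapos : 0 < a.card := Finset.card_pos.2 ⟨w, hw⟩
      rcases Multiset.mem_add.1 hac with h | h
      · obtain ⟨hu0, hk⟩ := Multiset.mem_replicate.1 h
        obtain ⟨G, hG⟩ := Multiset.card_pos_iff_exists_mem.1 (by rw [hGscard]; omega)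
        obtain ⟨H, hH⟩ := Multiset.card_pos_iff_exists_mem.1 (by rw [hHscard]; omega)
        have hpos : 0 < (G ∩ H).card := by rw [hGHcard G hG H hH]; omega
        obtain ⟨v, _⟩ := Finset.card_pos.1 hpos
        exact ⟨fun _ => Sum.inl v⟩
      · have hm : 0 < m := by
          have := Multiset.mem_singleton.1 h
          omega
        exact ⟨fun _ => Sum.inr ⟨0, hm⟩⟩
    · exact ⟨fun w => absurd ⟨w⟩ hW⟩
  have hBHdisj : ∀ H ∈ Hs, ∀ b ∈ BH H, ∀ x ∈ b, ∀ b' ∈ (BH H).erase b, x ∉ b' := by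
    intro H hH b hb x hx b' hb' hx'
    obtain v | j := x
    · -- x = inl v
      have hbG : ∃ G ∈ Gs, b = (G ∩ H).map inlE := by
        rcases Multiset.mem_add.1 hb with h | h
        · obtain ⟨G, hG, rfl⟩ := Multiset.mem_map.1 h; exact ⟨G, hG, rfl⟩
        · exfalso
          rw [Multiset.mem_singleton.1 h] at hx
          obtain ⟨j, hj⟩ := (hMset _).1 hx
          simp at hj
      obtain ⟨G, hG, rfl⟩ := hbG
      have hvGH : v ∈ G ∩ H := by
        obtain ⟨v', hv', he⟩ := Finset.mem_map.1 hx
        have : v' = v := Sum.inl_injective he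
        exact this ▸ hv'
      have hbmem : (G ∩ H).map inlE ∈ Gs.map (fun G => (G ∩ H).map inlE) :=
        Multiset.mem_map_of_mem _ hG
      have hb'' : b' ∈ (Gs.map (fun G => (G ∩ H).map inlE)).erase ((G ∩ H).map inlE)
          + ({Mset} : Multiset (Finset (V ⊕ Fin m))) := by
        have : (BH H).erase ((G ∩ H).map inlE)
            = (Gs.map (fun G => (G ∩ H).map inlE)).erase ((G ∩ H).map inlE) + {Mset} :=
          Multiset.erase_add_left_pos _ hbmem
        rw [← this]; exact hb'
      rcases Multiset.mem_add.1 hb'' with h | h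
      · -- b' comes from another group
        have hGsplit : Gs.map (fun G => (G ∩ H).map inlE)
            = ((G ∩ H).map inlE) ::ₘ (Gs.erase G).map (fun G => (G ∩ H).map inlE) := by
          conv_lhs => rw [← Multiset.cons_erase hG]
          rw [Multiset.map_cons]
        rw [hGsplit, Multiset.erase_cons_head] at h
        obtain ⟨G₂, hG₂, hbe⟩ := Multiset.mem_map.1 h
        rw [← hbe] at hx'
        obtain ⟨v', hv', he⟩ := Finset.mem_map.1 hx'
        have hv'v : v' = v := Sum.inl_injective he
        exact hGsDisj G hG v (Finset.mem_inter.1 hvGH).1 G₂ hG₂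
          (hv'v ▸ (Finset.mem_inter.1 hv').1)
      · rw [Multiset.mem_singleton.1 h] at hx'
        obtain ⟨j, hj⟩ := (hMset _).1 hx'
        simp at hj
    · -- x = inr j : b must be Mset
      have hbM : b = Mset := by
        rcases Multiset.mem_add.1 hb with h | h
        · exfalso
          obtain ⟨G, hG, rfl⟩ := Multiset.mem_map.1 h
          obtain ⟨v', hv', he⟩ := Finset.mem_map.1 hx
          simp [inlE] at he
        · exact Multiset.mem_singleton.1 h
      subst hbM
      have : (BH H).erase Mset = Gs.map (fun G => (G ∩ H).map inlE) := by
        show (Gs.map (fun G => (G ∩ H).map inlE) + {Mset}).erase Mset = _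
        rw [Multiset.erase_add_right_pos _ (Multiset.mem_singleton_self _)]
        simp
      rw [this] at hb'
      obtain ⟨G₂, hG₂, rfl⟩ := Multiset.mem_map.1 hb'
      obtain ⟨v', hv', he⟩ := Finset.mem_map.1 hx'
      simp [inlE] at he
  have hRel : ∀ H ∈ Hs, Multiset.Rel (fun a b => a.card = b.card) Ws (BH H) := by
    intro H hH
    have h1 : Ws.map Finset.card = (BH H).map Finset.card := by
      rw [hWs, hBHcard H hH]
    rw [← Multiset.rel_eq] at h1
    exact Multiset.rel_map.1 h1
  have f₀ : W → V ⊕ Fin m := Classical.choice hfzero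
  have key : ∀ H ∈ Hs, ∃ f : W → V ⊕ Fin m,
      (∀ x y a a', a ∈ Ws → a' ∈ Ws → x ∈ a → y ∈ a' → f x = f y → x = y) ∧
      (∀ a ∈ Ws, ∃ b ∈ BH H, ∀ y, y ∈ b ↔ ∃ x ∈ a, f x = y) ∧
      (∀ b ∈ BH H, ∃ a ∈ Ws, ∀ y, y ∈ b ↔ ∃ x ∈ a, f x = y) :=
    fun H hH => glue f₀ Ws (BH H) (hRel H hH) hWsDisj (hBHdisj H hH)
  choose! fch hinj0 himg hsur using key
  have hinj : ∀ H ∈ Hs, Function.Injective (fch H) := by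
    intro H hH w w' h
    obtain ⟨a, ha, hw⟩ := htot w
    obtain ⟨a', ha', hw'⟩ := htot w'
    exact hinj0 H hH w w' a a' ha ha' hw hw' h
  have hbcases : ∀ H, ∀ b ∈ BH H, (∃ G ∈ Gs, b = (G ∩ H).map inlE) ∨ b = Mset := by
    intro H b hb
    rcases Multiset.mem_add.1 hb with h | h
    · obtain ⟨G, hG, rfl⟩ := Multiset.mem_map.1 h; exact Or.inl ⟨G, hG, rfl⟩
    · exact Or.inr (Multiset.mem_singleton.1 h)
  have hMmem : ∀ H, Mset ∈ BH H :=
    fun H => Multiset.mem_add.2 (Or.inr (Multiset.mem_singleton_self _))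
  have hmemBH : ∀ H ∈ Hs, ∀ w : W, ∃ b ∈ BH H, fch H w ∈ b := by
    intro H hH w
    obtain ⟨a, ha, hw⟩ := htot w
    obtain ⟨b, hb, hib⟩ := himg H hH a ha
    exact ⟨b, hb, (hib _).2 ⟨w, hw, rfl⟩⟩
  have hval : ∀ H ∈ Hs, ∀ w v, fch H w = Sum.inl v → v ∈ H ∧ ∃ G ∈ Gs, v ∈ G := by
    intro H hH w v hv
    obtain ⟨b, hb, hwb⟩ := hmemBH H hH w
    rw [hv] at hwb
    rcases hbcases H b hb with ⟨G, hG, rfl⟩ | rfl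
    · obtain ⟨v', hv', he⟩ := Finset.mem_map.1 hwb
      have hv'v : v' = v := Sum.inl_injective he
      subst hv'v
      exact ⟨(Finset.mem_inter.1 hv').2, G, hG, (Finset.mem_inter.1 hv').1⟩
    · obtain ⟨j, hj⟩ := (hMset _).1 hwb
      simp at hj
  have hsg : ∀ H ∈ Hs, ∀ w w' b, b ∈ BH H → fch H w ∈ b → fch H w' ∈ b →
      ∃ a ∈ Ws, w ∈ a ∧ w' ∈ a := by
    intro H hH w w' b hb hwb hw'b
    obtain ⟨a, ha, hw⟩ := htot w
    obtain ⟨ba, hba, hiba⟩ := himg H hH a ha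
    have h1 : fch H w ∈ ba := (hiba _).2 ⟨w, hw, rfl⟩
    have hbeq : ba = b := by
      by_contra hne
      exact hBHdisj H hH b hb (fch H w) hwb ba ((Multiset.mem_erase_of_ne hne).2 hba) h1
    subst hbeq
    obtain ⟨x, hx, hfx⟩ := (hiba _).1 hw'b
    have : x = w' := hinj H hH hfx
    exact ⟨a, ha, hw, this ▸ hx⟩
  have hsurjH : ∀ H ∈ Hs, ∀ v ∈ H, ∃ w, fch H w = Sum.inl v := by
    intro H hH v hv
    obtain ⟨G, s, h1, h2, _⟩ := hD.gpartition v
    have hG : G ∈ Gs := h1 ▸ Multiset.mem_cons_self _ _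
    have hb : (G ∩ H).map inlE ∈ BH H :=
      Multiset.mem_add.2 (Or.inl (Multiset.mem_map_of_mem _ hG))
    obtain ⟨a, ha, hia⟩ := hsur H hH _ hb
    have hmm : Sum.inl v ∈ (G ∩ H).map inlE :=
      Finset.mem_map.2 ⟨v, Finset.mem_inter.2 ⟨h2, hv⟩, rfl⟩
    obtain ⟨w, hw, hfw⟩ := (hia _).1 hmm
    exact ⟨w, hfw⟩
  have hsurjM : ∀ H ∈ Hs, ∀ j : Fin m, ∃ w, fch H w = Sum.inr j := by
    intro H hH j
    obtain ⟨a, ha, hia⟩ := hsur H hH Mset (hMmem H)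
    obtain ⟨w, hw, hfw⟩ := (hia _).1 ((hMset _).2 ⟨j, rfl⟩)
    exact ⟨w, hfw⟩
  have hBHsub : ∀ H, ∀ b ∈ BH H, ∃ Z ∈ Gs', ∀ z ∈ b, z ∈ Z := by
    intro H b hb
    rcases hbcases H b hb with ⟨G, hG, rfl⟩ | rfl
    · refine ⟨G.map inlE, Multiset.mem_add.2 (Or.inl (Multiset.mem_map_of_mem _ hG)), ?_⟩
      intro z hz
      obtain ⟨v, hv, rfl⟩ := Finset.mem_map.1 hz
      exact Finset.mem_map_of_mem _ ((Finset.mem_inter.1 hv).1)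
    · exact ⟨Mset, hMsetGs', fun z hz => hz⟩
  have hnosame : ∀ H ∈ Hs, ∀ x y, (∀ Z ∈ Gs', ¬(x ∈ Z ∧ y ∈ Z)) →
      ∀ w w', fch H w = x → fch H w' = y → ∀ a ∈ Ws, ¬(w ∈ a ∧ w' ∈ a) := by
    rintro H hH x y hxy w w' hw hw' a ha ⟨hwa, hw'a⟩
    obtain ⟨b, hb, hib⟩ := himg H hH a ha
    obtain ⟨Z, hZ, hsub⟩ := hBHsub H b hb
    exact hxy Z hZ ⟨hsub x ((hib x).2 ⟨w, hwa, hw⟩), hsub y ((hib y).2 ⟨w', hw'a, hw'⟩)⟩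
  have hsame : ∀ H ∈ Hs, ∀ Z ∈ Gs', ∀ x ∈ Z, ∀ y ∈ Z, ∀ w w',
      fch H w = x → fch H w' = y → ∃ a ∈ Ws, w ∈ a ∧ w' ∈ a := by
    intro H hH Z hZ x hx y hy w w' hw hw'
    rcases Multiset.mem_add.1 hZ with h | h
    · obtain ⟨G, hG, rfl⟩ := Multiset.mem_map.1 h
      obtain ⟨v, hv, rfl⟩ := Finset.mem_map.1 hx
      obtain ⟨v', hv', rfl⟩ := Finset.mem_map.1 hy
      have h1 := (hval H hH w v hw).1
      have h2 := (hval H hH w' v' hw').1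
      have hb : (G ∩ H).map inlE ∈ BH H :=
        Multiset.mem_add.2 (Or.inl (Multiset.mem_map_of_mem _ hG))
      refine hsg H hH w w' _ hb ?_ ?_
      · rw [hw]; exact Finset.mem_map.2 ⟨v, Finset.mem_inter.2 ⟨hv, h1⟩, rfl⟩
      · rw [hw']; exact Finset.mem_map.2 ⟨v', Finset.mem_inter.2 ⟨hv', h2⟩, rfl⟩
    · rw [Multiset.mem_singleton.1 h] at hx hy
      exact hsg H hH w w' Mset (hMmem H) (hw ▸ hx) (hw' ▸ hw'.symm ▸ hy)
    -- the block set
  let Bs' : Finset (Finset (V ⊕ Fin m)) :=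
    Bs.image (fun b => b.map inlE) ∪
      Hs.toFinset.biUnion (fun H => Cs.image (fun c => c.image (fch H)))
  have hBs' : ∀ b, b ∈ Bs' ↔ ((∃ B₀ ∈ Bs, B₀.map inlE = b) ∨
      (∃ H ∈ Hs, ∃ c ∈ Cs, c.image (fch H) = b)) := by
    intro b
    simp only [Bs', Finset.mem_union, Finset.mem_image, Finset.mem_biUnion,
      Multiset.mem_toFinset]
  have hmixcover : ∀ (v : V) (j : Fin m), (∀ Z ∈ Gs', ¬(Sum.inl v ∈ Z ∧ Sum.inr j ∈ Z)) →
      ∃! b, b ∈ Bs' ∧ Sum.inl v ∈ b ∧ Sum.inr j ∈ b := by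
    intro v j hxy
    obtain ⟨Hv, sH, hHv1, hvH, _⟩ := hD.hpartition v
    have hHv : Hv ∈ Hs := hHv1 ▸ Multiset.mem_cons_self _ _
    have hHuniq : ∀ H ∈ Hs, v ∈ H → H = Hv := by
      intro H hH h1
      by_contra hne'
      exact (hHsDisj Hv hHv v hvH H ((Multiset.mem_erase_of_ne hne').2 hH)) h1
    obtain ⟨w, hw⟩ := hsurjH Hv hHv v hvH
    obtain ⟨w', hw'⟩ := hsurjM Hv hHv j
    have hwne : w ≠ w' := by
      intro h
      rw [h, hw'] at hw
      exact Sum.inr_ne_inl hw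
    have hdg := hnosame Hv hHv _ _ hxy w w' hw hw'
    obtain ⟨c, ⟨hc, hwc, hw'c⟩, hcu⟩ := hF.cross w w' hwne hdg
    refine ⟨c.image (fch Hv), ⟨(hBs' _).2 (Or.inr ⟨Hv, hHv, c, hc, rfl⟩),
      Finset.mem_image.2 ⟨w, hwc, hw⟩, Finset.mem_image.2 ⟨w', hw'c, hw'⟩⟩, ?_⟩
    rintro b ⟨hb, hxb, hyb⟩
    rcases (hBs' b).1 hb with ⟨B₀, hB₀, rfl⟩ | ⟨H', hH', c', hc', rfl⟩
    · exfalso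
      obtain ⟨v₁, _, he⟩ := Finset.mem_map.1 hyb
      exact Sum.inl_ne_inr he
    · obtain ⟨w₁, hw₁c, hw₁⟩ := Finset.mem_image.1 hxb
      have hHeq : H' = Hv := hHuniq H' hH' (hval H' hH' w₁ v hw₁).1
      subst hHeq
      obtain ⟨w₂, hw₂c, hw₂⟩ := Finset.mem_image.1 hyb
      have e1 : w₁ = w := hinj H' hH' (by rw [hw₁, hw])
      have e2 : w₂ = w' := hinj H' hH' (by rw [hw₂, hw'])
      rw [hcu c' ⟨hc', e1 ▸ hw₁c, e2 ▸ hw₂c⟩]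
  refine ⟨V ⊕ Fin m, inferInstance, Gs', Bs', ⟨?_, ?_, ?_, ?_⟩, ?_⟩
  · -- partition
    intro p
    obtain v | j := p
    · obtain ⟨G, s, h1, h2, h3⟩ := hD.gpartition v
      refine ⟨G.map inlE, s.map (fun G => G.map inlE) + {Mset}, ?_,
        Finset.mem_map_of_mem _ h2, ?_⟩
      · show Gs.map (fun G => G.map inlE) + {Mset} = _
        rw [h1, Multiset.map_cons, Multiset.cons_add]
      · intro G' hG'
        rcases Multiset.mem_add.1 hG' with h | h
        · obtain ⟨G₁, hG₁, rfl⟩ := Multiset.mem_map.1 h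
          intro hmem
          exact h3 G₁ hG₁ ((Finset.mem_map' _).1 hmem)
        · rw [Multiset.mem_singleton.1 h]
          intro hmem
          obtain ⟨j, hj⟩ := (hMset _).1 hmem
          exact Sum.inl_ne_inr hj
    · refine ⟨Mset, Gs.map (fun G => G.map inlE), ?_, (hMset _).2 ⟨j, rfl⟩, ?_⟩
      · show Gs.map (fun G => G.map inlE) + {Mset} = _
        rw [add_comm, Multiset.singleton_add]
      · intro G' hG'
        obtain ⟨G₁, _, rfl⟩ := Multiset.mem_map.1 hG'
        intro hmem
        obtain ⟨v, _, he⟩ := Finset.mem_map.1 hmem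
        exact Sum.inl_ne_inr he
  · -- sizes
    intro b hb
    rcases (hBs' b).1 hb with ⟨B₀, hB₀, rfl⟩ | ⟨H, hH, c, hc, rfl⟩
    · rw [Finset.card_map]; exact hD.sizes B₀ hB₀
    · rw [Finset.card_image_of_injective _ (hinj H hH)]; exact hF.sizes c hc
  · -- cross
    intro x y hne hxy
    obtain v | j := x <;> obtain v' | j' := y
    · -- both inl
      have hvne : v ≠ v' := fun h => hne (congrArg Sum.inl h)
      have hgrps : ∀ G ∈ Gs, ¬(v ∈ G ∧ v' ∈ G) := by
        rintro G hG ⟨h1, h2⟩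
        exact hxy (G.map inlE) (Multiset.mem_add.2 (Or.inl (Multiset.mem_map_of_mem _ hG)))
          ⟨Finset.mem_map_of_mem _ h1, Finset.mem_map_of_mem _ h2⟩
      obtain ⟨Hv, sH, hHv1, hvH, _⟩ := hD.hpartition v
      have hHv : Hv ∈ Hs := hHv1 ▸ Multiset.mem_cons_self _ _
      have hHuniq : ∀ H ∈ Hs, v ∈ H → H = Hv := by
        intro H hH h1
        by_contra hne'
        exact (hHsDisj Hv hHv v hvH H ((Multiset.mem_erase_of_ne hne').2 hH)) h1
      by_cases hv'H : v' ∈ Hv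
      · -- same hole
        obtain ⟨w, hw⟩ := hsurjH Hv hHv v hvH
        obtain ⟨w', hw'⟩ := hsurjH Hv hHv v' hv'H
        have hwne : w ≠ w' := fun h => hvne (Sum.inl_injective (by rw [← hw, ← hw', h]))
        have hdg := hnosame Hv hHv _ _ hxy w w' hw hw'
        obtain ⟨c, ⟨hc, hwc, hw'c⟩, hcu⟩ := hF.cross w w' hwne hdg
        refine ⟨c.image (fch Hv), ⟨(hBs' _).2 (Or.inr ⟨Hv, hHv, c, hc, rfl⟩),
          Finset.mem_image.2 ⟨w, hwc, hw⟩, Finset.mem_image.2 ⟨w', hw'c, hw'⟩⟩, ?_⟩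
        rintro b ⟨hb, hxb, hyb⟩
        rcases (hBs' b).1 hb with ⟨B₀, hB₀, rfl⟩ | ⟨H', hH', c', hc', rfl⟩
        · exfalso
          have h1 : v ∈ B₀ := (Finset.mem_map' _).1 hxb
          have h2 : v' ∈ B₀ := (Finset.mem_map' _).1 hyb
          exact hD.withinH Hv hHv v hvH v' hv'H hvne B₀ hB₀ ⟨h1, h2⟩
        · obtain ⟨w₁, hw₁c, hw₁⟩ := Finset.mem_image.1 hxb
          have hHeq : H' = Hv := hHuniq H' hH' (hval H' hH' w₁ v hw₁).1
          subst hHeq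
          obtain ⟨w₂, hw₂c, hw₂⟩ := Finset.mem_image.1 hyb
          have e1 : w₁ = w := hinj H' hH' (by rw [hw₁, hw])
          have e2 : w₂ = w' := hinj H' hH' (by rw [hw₂, hw'])
          rw [hcu c' ⟨hc', e1 ▸ hw₁c, e2 ▸ hw₂c⟩]
      · -- different holes
        have hholes : ∀ H ∈ Hs, ¬(v ∈ H ∧ v' ∈ H) := by
          rintro H hH ⟨h1, h2⟩
          exact hv'H ((hHuniq H hH h1) ▸ h2)
        obtain ⟨B₀, ⟨hB₀, h1, h2⟩, hBu⟩ := hD.cross v v' hvne hgrps hholes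
        refine ⟨B₀.map inlE, ⟨(hBs' _).2 (Or.inl ⟨B₀, hB₀, rfl⟩),
          Finset.mem_map_of_mem _ h1, Finset.mem_map_of_mem _ h2⟩, ?_⟩
        rintro b ⟨hb, hxb, hyb⟩
        rcases (hBs' b).1 hb with ⟨B₁, hB₁, rfl⟩ | ⟨H', hH', c', hc', rfl⟩
        · rw [hBu B₁ ⟨hB₁, (Finset.mem_map' _).1 hxb, (Finset.mem_map' _).1 hyb⟩]
        · exfalso
          obtain ⟨w₁, _, hw₁⟩ := Finset.mem_image.1 hxb
          obtain ⟨w₂, _, hw₂⟩ := Finset.mem_image.1 hyb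
          exact hholes H' hH' ⟨(hval H' hH' w₁ v hw₁).1, (hval H' hH' w₂ v' hw₂).1⟩
    · -- inl, inr
      exact hmixcover v j' hxy
    · -- inr, inl
      have hxy' : ∀ Z ∈ Gs', ¬(Sum.inl v' ∈ Z ∧ Sum.inr j ∈ Z) := by
        rintro Z hZ ⟨h1, h2⟩
        exact hxy Z hZ ⟨h2, h1⟩
      obtain ⟨b, ⟨h1, h2, h3⟩, hu⟩ := hmixcover v' j hxy'
      exact ⟨b, ⟨h1, h3, h2⟩, fun b' ⟨g1, g2, g3⟩ => hu b' ⟨g1, g3, g2⟩⟩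
    · -- both inr
      exact absurd ⟨(hMset _).2 ⟨j, rfl⟩, (hMset _).2 ⟨j', rfl⟩⟩ (hxy Mset hMsetGs')
  · -- within
    intro Z hZ x hx y hy hxyne b hb
    rintro ⟨hxb, hyb⟩
    rcases (hBs' b).1 hb with ⟨B₀, hB₀, rfl⟩ | ⟨H, hH, c, hc, rfl⟩
    · rcases Multiset.mem_add.1 hZ with h | h
      · obtain ⟨G, hG, rfl⟩ := Multiset.mem_map.1 h
        obtain ⟨v, hv, rfl⟩ := Finset.mem_map.1 hx
        obtain ⟨v', hv', rfl⟩ := Finset.mem_map.1 hy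
        have hvb : v ∈ B₀ := (Finset.mem_map' _).1 hxb
        have hv'b : v' ∈ B₀ := (Finset.mem_map' _).1 hyb
        have hvne : v ≠ v' := fun he => hxyne (by rw [he])
        exact hD.withinG G hG v hv v' hv' hvne B₀ hB₀ ⟨hvb, hv'b⟩
      · rw [Multiset.mem_singleton.1 h] at hx
        obtain ⟨j, rfl⟩ := (hMset x).1 hx
        obtain ⟨v, _, he⟩ := Finset.mem_map.1 hxb
        exact Sum.inl_ne_inr he
    · obtain ⟨w, hwc, hw⟩ := Finset.mem_image.1 hxb
      obtain ⟨w', hw'c, hw'⟩ := Finset.mem_image.1 hyb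
      obtain ⟨a, ha, hwa, hw'a⟩ := hsame H hH Z hZ x hx y hy w w' hw hw'
      have hwne : w ≠ w' := fun he => hxyne (by rw [← hw, ← hw', he])
      exact hF.within a ha w hwa w' hw'a hwne c hc ⟨hwc, hw'c⟩
  · -- the type
    show (Gs.map (fun G => G.map inlE) + {Mset}).map Finset.card = _
    rw [Multiset.map_add, Multiset.map_map, Multiset.map_singleton]
    congr 1
    · have h1 : Gs.map (Finset.card ∘ fun G => G.map inlE) = Gs.map Finset.card :=
        Multiset.map_congr rfl (fun G _ => Finset.card_map _)
      rw [h1, hGs]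
    · simp [Mset]
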